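/- Let p be a prime with p > 3. Then ∑_{a=1}^{p−1} q_p(a) ≡ B_{p−1} − 1 + 1/p (mod p²), i.e. the rational number ∑_{a=1}^{p−1} q_p(a) − (B_{p−1} − 1 + 1/p) equals p²·(a/b) for some integers a, b with p ∤ b. -/

import Mathlib

open Finset

/-- `x ≡ y (mod p^k)` for rationals: `x - y = p^k * (c/d)` with `p ∤ d`. -/
def ratCongr (p k : ℕ) (x y : ℚ) : Prop :=
  ∃ c d : ℤ, ¬ (p : ℤ) ∣ d ∧ x - y = (p : ℚ) ^ k * ((c : ℚ) / (d : ℚ))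

/-- The Wilson quotient `W_p = ((p-1)! + 1)/p` (an integer by Wilson's theorem). -/
def wilsonQuotient (p : ℕ) : ℤ := ((Nat.factorial (p - 1) : ℤ) + 1) / p

/-- The Fermat quotient `q_p(a) = (a^(p-1) - 1)/p` (an integer for `p ∤ a`). -/
def fermatQuotient (p a : ℕ) : ℤ := ((a : ℤ) ^ (p - 1) - 1) / p

/-- A prime `p` is a Wilson prime if `p ∣ W_p`. -/
def IsWilsonPrime (p : ℕ) : Prop := (p : ℤ) ∣ wilsonQuotient p

/-- A prime `p` is a Lerch prime if `∑_{a=1}^{p-1} q_p(a) ≡ W_p (mod p²)`. -/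
def IsLerchPrime (p : ℕ) : Prop :=
  (p : ℤ) ^ 2 ∣ (∑ a ∈ Icc 1 (p - 1), fermatQuotient p a) - wilsonQuotient p

/-- The harmonic number `H_a = ∑_{k=1}^{a} 1/k`. -/
def harmonicNum (a : ℕ) : ℚ := ∑ k ∈ Icc 1 a, (1 : ℚ) / k

/-- The generalized harmonic number `H_{a,2} = ∑_{k=1}^{a} 1/k²`. -/
def harmonicNum2 (a : ℕ) : ℚ := ∑ k ∈ Icc 1 a, (1 : ℚ) / (k : ℚ) ^ 2


section Aux
variable {p : ℕ} [hp : Fact p.Prime]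

lemma padicNorm_pow' (x : ℚ) (m : ℕ) : padicNorm p (x ^ m) = padicNorm p x ^ m := by
  induction m with
  | zero => simp [padicNorm.one]
  | succ n ih => rw [pow_succ, pow_succ, padicNorm.mul, ih]

lemma padicNorm_p_pow (m : ℕ) : padicNorm p ((p : ℚ) ^ m) = (p : ℚ) ^ (-(m : ℤ)) := by
  rw [padicNorm_pow', padicNorm.padicNorm_p_of_prime, inv_pow, ← zpow_natCast, ← zpow_neg]

lemma aux_sum_pow_dvd (k : ℕ) (hk : k < p - 1) :
    (p : ℤ) ∣ (∑ a ∈ range p, (a : ℤ) ^ k) := by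
  haveI : NeZero p := ⟨hp.1.pos.ne'⟩
  rw [← ZMod.intCast_zmod_eq_zero_iff_dvd]
  push_cast
  have himg : (range p).image (Nat.cast : ℕ → ZMod p) = univ := by
    apply Finset.eq_univ_of_card
    rw [Finset.card_image_of_injOn, card_range, ZMod.card]
    intro a ha b hb hab
    have := congrArg ZMod.val hab
    rwa [ZMod.val_cast_of_lt (mem_range.mp ha), ZMod.val_cast_of_lt (mem_range.mp hb)] at this
  have hinj : Set.InjOn (Nat.cast : ℕ → ZMod p) (range p) := by
    intro a ha b hb hab
    have := congrArg ZMod.val hab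
    rwa [ZMod.val_cast_of_lt (mem_range.mp (by simpa using ha)),
      ZMod.val_cast_of_lt (mem_range.mp (by simpa using hb))] at this
  have : (∑ a ∈ range p, ((a : ZMod p)) ^ k) = ∑ x : ZMod p, x ^ k := by
    rw [← himg, Finset.sum_image hinj]
  rw [this]
  have hcard : k < Fintype.card (ZMod p) - 1 := by rwa [ZMod.card]
  exact FiniteField.sum_pow_lt_card_sub_one (K := ZMod p) k hcard

lemma bernoulli_padicNorm_le : ∀ k, k ≤ p - 2 → padicNorm p (bernoulli k) ≤ 1 := by
  have hp2 : 2 ≤ p := hp.1.two_le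
  have hq0 : (0 : ℚ) < p := by exact_mod_cast hp.1.pos
  have hq1 : (1 : ℚ) < p := by exact_mod_cast hp.1.one_lt
  intro k
  induction k using Nat.strong_induction_on with
  | _ k IH =>
  intro hk
  rcases Nat.eq_zero_or_pos k with rfl | hk1
  · simp [padicNorm.one]
  have hkp : k + 1 < p := by omega
  have hfa := sum_range_pow p k
  rw [Finset.sum_range_succ] at hfa
  have hk1q : ((k : ℚ) + 1) ≠ 0 := by positivity
  have hlast : bernoulli k * ((k + 1).choose k : ℚ) * (p : ℚ) ^ (k + 1 - k) / ((k : ℚ) + 1)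
      = bernoulli k * p := by
    rw [Nat.choose_succ_self_right, Nat.add_sub_cancel_left, pow_one]
    push_cast
    field_simp
  rw [hlast] at hfa
  -- hfa : ∑ a ∈ range p, (a:ℚ)^k = ∑ i ∈ range k, term i + bernoulli k * p
  have hkey : bernoulli k * (p : ℚ) =
      (∑ a ∈ range p, (a : ℚ) ^ k) -
        ∑ i ∈ range k, bernoulli i * ((k + 1).choose i : ℚ) * (p : ℚ) ^ (k + 1 - i) / ((k : ℚ) + 1) :=
    by linarith [hfa]
  have hU : padicNorm p (∑ a ∈ range p, (a : ℚ) ^ k) ≤ (p : ℚ)⁻¹ := by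
    have hcast : (∑ a ∈ range p, (a : ℚ) ^ k) = (((∑ a ∈ range p, (a : ℤ) ^ k) : ℤ) : ℚ) := by
      push_cast; ring
    rw [hcast]
    have := (padicNorm.dvd_iff_norm_le (p := p) (n := 1)
      (z := ∑ a ∈ range p, (a : ℤ) ^ k)).mp (by simpa using aux_sum_pow_dvd k (by omega))
    simpa using this
  have hSig : padicNorm p (∑ i ∈ range k,
      bernoulli i * ((k + 1).choose i : ℚ) * (p : ℚ) ^ (k + 1 - i) / ((k : ℚ) + 1)) ≤ (p : ℚ)⁻¹ := by
    apply padicNorm.sum_le'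
    · intro i hi
      have hik : i < k := mem_range.mp hi
      rw [padicNorm.div, padicNorm.mul, padicNorm.mul, padicNorm_p_pow]
      have hden : padicNorm p ((k : ℚ) + 1) = 1 := by
        have : ((k : ℚ) + 1) = ((k + 1 : ℕ) : ℚ) := by push_cast; ring
        rw [this, padicNorm.nat_eq_one_iff]
        intro h
        exact absurd (Nat.le_of_dvd (by omega) h) (by omega)
      rw [hden, div_one]
      have hB : padicNorm p (bernoulli i) ≤ 1 := IH i hik (by omega)
      have hC : padicNorm p (((k + 1).choose i : ℕ) : ℚ) ≤ 1 := padicNorm.of_nat _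
      have hP : (p : ℚ) ^ (-((k + 1 - i : ℕ) : ℤ)) ≤ (p : ℚ)⁻¹ := by
        rw [← zpow_neg_one]
        apply zpow_le_zpow_right₀ hq1.le
        have h1 : (1 : ℤ) ≤ ((k + 1 - i : ℕ) : ℤ) := by exact_mod_cast Nat.one_le_iff_ne_zero.mpr (by omega)
        linarith
      have hBC : padicNorm p (bernoulli i) * padicNorm p (((k + 1).choose i : ℕ) : ℚ) ≤ 1 :=
        mul_le_one₀ hB (padicNorm.nonneg _) hC
      have := mul_le_mul hBC hP (zpow_nonneg hq0.le _) zero_le_one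
      simpa using this
    · exact inv_nonneg.mpr hq0.le
  have hmul : padicNorm p (bernoulli k * (p : ℚ)) ≤ (p : ℚ)⁻¹ := by
    rw [hkey]
    exact le_trans padicNorm.sub (max_le hU hSig)
  rw [padicNorm.mul, padicNorm.padicNorm_p_of_prime] at hmul
  calc padicNorm p (bernoulli k) = (padicNorm p (bernoulli k) * (p : ℚ)⁻¹) * p := by
        field_simp
    _ ≤ (p : ℚ)⁻¹ * p := mul_le_mul_of_nonneg_right hmul hq0.le
    _ = 1 := inv_mul_cancel₀ hq0.ne'

end Aux


lemma ratCongr_of_padicNorm {p : ℕ} [hp : Fact p.Prime] {x y : ℚ}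
    (h : padicNorm p (x - y) ≤ (p : ℚ) ^ (-2 : ℤ)) : ratCongr p 2 x y := by
  have hq0 : (0 : ℚ) < p := by exact_mod_cast hp.1.pos
  set q := x - y with hqdef
  rcases eq_or_ne q 0 with h0 | h0
  · refine ⟨0, 1, ?_, by simp [← hqdef, h0]⟩
    intro hd
    have h2 : (2 : ℤ) ≤ (p : ℤ) := by exact_mod_cast hp.1.two_le
    have := Int.le_of_dvd one_pos hd
    omega
  · have hden0 : ((q.den : ℚ)) ≠ 0 := by exact_mod_cast q.den_nz
    have hnumq : ((q.num : ℚ)) = q * (q.den : ℚ) := by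
      have h2 : q = ((q.num : ℚ)) / q.den := (Rat.num_div_den q).symm
      calc ((q.num : ℚ)) = ((q.num : ℚ)) / q.den * q.den := (div_mul_cancel₀ _ hden0).symm
        _ = q * q.den := by rw [← h2]
    have hnormnum : padicNorm p ((q.num : ℚ)) ≤ (p : ℚ) ^ (-2 : ℤ) := by
      rw [hnumq, padicNorm.mul]
      have h1 : padicNorm p ((q.den : ℚ)) ≤ 1 := padicNorm.of_nat _
      have := mul_le_mul h h1 (padicNorm.nonneg _) (zpow_nonneg hq0.le _)
      simpa using this
    have hnum : ((p ^ 2 : ℕ) : ℤ) ∣ q.num := by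
      rw [padicNorm.dvd_iff_norm_le]
      simpa using hnormnum
    have hnum' : (p : ℤ) ^ 2 ∣ q.num := by exact_mod_cast hnum
    have hden : ¬ (p : ℤ) ∣ (q.den : ℤ) := by
      intro hdvd
      have hd : p ∣ q.den := by exact_mod_cast hdvd
      have hn : p ∣ q.num.natAbs := by
        have h3 : (p : ℤ) ∣ q.num := dvd_trans (dvd_pow_self _ two_ne_zero) hnum'
        have := Int.natAbs_dvd_natAbs.mpr h3
        simpa using this
      have h1 : p ∣ Nat.gcd q.num.natAbs q.den := Nat.dvd_gcd hn hd
      rw [q.reduced] at h1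
      exact hp.1.one_lt.ne' (Nat.dvd_one.mp h1)
    obtain ⟨c, hc⟩ := hnum'
    refine ⟨c, q.den, hden, ?_⟩
    calc x - y = q := hqdef.symm
      _ = ((q.num : ℚ)) / q.den := (Rat.num_div_den q).symm
      _ = ((p : ℚ) ^ 2 * (c : ℚ)) / q.den := by rw [hc]; push_cast; ring
      _ = (p : ℚ) ^ 2 * ((c : ℚ) / (q.den : ℚ)) := mul_div_assoc _ _ _

theorem stmt_7 (p : ℕ) (hp : p.Prime) (hp3 : 3 < p) :
    ratCongr p 2 (((∑ a ∈ Icc 1 (p - 1), fermatQuotient p a : ℤ)) : ℚ)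
      (bernoulli (p - 1) - 1 + 1 / (p : ℚ)) := by
  haveI : Fact p.Prime := ⟨hp⟩
  have hp5 : 5 ≤ p := by
    have h4 : p ≠ 4 := by intro h; rw [h] at hp; norm_num at hp
    omega
  have hq0 : (0 : ℚ) < p := by exact_mod_cast hp.pos
  have hq1 : (1 : ℚ) < p := by exact_mod_cast hp.one_lt
  apply ratCongr_of_padicNorm
  set q : ℚ := (((∑ a ∈ Icc 1 (p - 1), fermatQuotient p a : ℤ)) : ℚ) -
    (bernoulli (p - 1) - 1 + 1 / (p : ℚ)) with hqdef
  -- Step 1: S * p = T - (p - 1)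
  have hS : (((∑ a ∈ Icc 1 (p - 1), fermatQuotient p a : ℤ)) : ℚ) * p
      = (∑ a ∈ Icc 1 (p - 1), (a : ℚ) ^ (p - 1)) - ((p : ℚ) - 1) := by
    have hterm : ∀ a ∈ Icc 1 (p - 1),
        ((fermatQuotient p a : ℤ) : ℚ) * p = (a : ℚ) ^ (p - 1) - 1 := by
      intro a ha
      rw [mem_Icc] at ha
      have hnd : ¬ p ∣ a := by
        intro h
        have := Nat.le_of_dvd (by omega) h
        omega
      have hZ : ((a : ZMod p)) ≠ 0 := by
        rw [Ne, ZMod.natCast_eq_zero_iff]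
        exact hnd
      have hfermat : ((a : ZMod p)) ^ (p - 1) = 1 := ZMod.pow_card_sub_one_eq_one hZ
      have hdvd : (p : ℤ) ∣ ((a : ℤ) ^ (p - 1) - 1) := by
        rw [← ZMod.intCast_zmod_eq_zero_iff_dvd]
        push_cast
        rw [hfermat]
        ring
      have h2 : (fermatQuotient p a) * (p : ℤ) = (a : ℤ) ^ (p - 1) - 1 :=
        Int.ediv_mul_cancel hdvd
      calc ((fermatQuotient p a : ℤ) : ℚ) * p = (((fermatQuotient p a * p : ℤ)) : ℚ) := by
            push_cast; ring
        _ = (((a : ℤ) ^ (p - 1) - 1 : ℤ) : ℚ) := by rw [h2]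
        _ = (a : ℚ) ^ (p - 1) - 1 := by push_cast; ring
    calc (((∑ a ∈ Icc 1 (p - 1), fermatQuotient p a : ℤ)) : ℚ) * p
        = ∑ a ∈ Icc 1 (p - 1), ((fermatQuotient p a : ℤ) : ℚ) * p := by
          push_cast; rw [Finset.sum_mul]
      _ = ∑ a ∈ Icc 1 (p - 1), ((a : ℚ) ^ (p - 1) - 1) := Finset.sum_congr rfl hterm
      _ = (∑ a ∈ Icc 1 (p - 1), (a : ℚ) ^ (p - 1)) - ((p : ℚ) - 1) := by
          rw [Finset.sum_sub_distrib, Finset.sum_const, Nat.card_Icc, nsmul_eq_mul, mul_one]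
          congr 1
          have h1 : p - 1 + 1 - 1 = p - 1 := by omega
          rw [h1, Nat.cast_sub hp.one_le, Nat.cast_one]
  -- Step 2: extend sum over range p
  have hT : (∑ a ∈ Icc 1 (p - 1), (a : ℚ) ^ (p - 1)) = ∑ a ∈ range p, (a : ℚ) ^ (p - 1) := by
    have hset : Icc 1 (p - 1) = (range p).erase 0 := by
      ext x
      simp only [mem_Icc, mem_erase, mem_range]
      omega
    rw [hset]
    rw [← Finset.add_sum_erase (range p) _ (mem_range.mpr hp.pos)]
    rw [Nat.cast_zero, zero_pow (by omega : p - 1 ≠ 0), zero_add]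
  -- Step 3: Faulhaber
  have hpp : p - 1 + 1 = p := Nat.succ_pred_eq_of_pos hp.pos
  have hF := sum_range_pow p (p - 1)
  rw [hpp] at hF
  have hcastp : ((p - 1 : ℕ) : ℚ) + 1 = (p : ℚ) := by
    have := congrArg (fun n : ℕ => (n : ℚ)) hpp
    push_cast at this
    linarith [this]
  rw [hcastp] at hF
  have hlast : bernoulli (p - 1) * ((p.choose (p - 1)) : ℚ) * (p : ℚ) ^ (p - (p - 1)) / (p : ℚ)
      = bernoulli (p - 1) * p := by
    have hc : p.choose (p - 1) = p := by
      have h1 : p.choose (p - (p - 1)) = p.choose (p - 1) := Nat.choose_symm (by omega)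
      have h2 : p - (p - 1) = 1 := by omega
      rw [h2] at h1
      rw [← h1, Nat.choose_one_right]
    rw [hc, show p - (p - 1) = 1 from by omega, pow_one]
    field_simp
  have hsplit : (∑ i ∈ range p, bernoulli i * ((p.choose i) : ℚ) * (p : ℚ) ^ (p - i) / (p : ℚ))
      = (∑ i ∈ range (p - 1), bernoulli i * ((p.choose i) : ℚ) * (p : ℚ) ^ (p - i) / (p : ℚ))
        + bernoulli (p - 1) * p := by
    rw [← hlast, ← Finset.sum_range_succ
      (fun i => bernoulli i * ((p.choose i) : ℚ) * (p : ℚ) ^ (p - i) / (p : ℚ)) (p - 1), hpp]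
  rw [hsplit] at hF
  -- Step 4: q * p = Σ'
  have hqp : q * p = ∑ i ∈ range (p - 1),
      bernoulli i * ((p.choose i) : ℚ) * (p : ℚ) ^ (p - i) / (p : ℚ) := by
    rw [hqdef]
    rw [sub_mul, hS, hT, hF]
    field_simp
    ring
  -- Step 5: norm bound on Σ'
  have hSig : padicNorm p (∑ i ∈ range (p - 1),
      bernoulli i * ((p.choose i) : ℚ) * (p : ℚ) ^ (p - i) / (p : ℚ)) ≤ (p : ℚ) ^ (-3 : ℤ) := by
    apply padicNorm.sum_le'
    · intro i hi
      have hilt : i < p - 1 := mem_range.mp hi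
      by_cases hodd : i = p - 2
      · have hb0 : bernoulli i = 0 := by
          rw [hodd, bernoulli_eq_bernoulli'_of_ne_one (by omega)]
          exact bernoulli'_eq_zero_of_odd (by
            rcases hp.eq_two_or_odd' with h2 | hoddp
            · omega
            · obtain ⟨m, hm⟩ := hoddp
              exact ⟨m - 1, by omega⟩) (by omega)
        rw [hb0]
        simp only [zero_mul, zero_div, padicNorm.zero]
        positivity
      · rw [padicNorm.div, padicNorm.mul, padicNorm.mul, padicNorm_p_pow,
          padicNorm.padicNorm_p_of_prime, div_eq_mul_inv, inv_inv]
        rcases Nat.eq_zero_or_pos i with rfl | hi1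
        · simp only [bernoulli_zero, padicNorm.one, Nat.choose_zero_right, Nat.cast_one,
            one_mul, Nat.sub_zero]
          calc (p : ℚ) ^ (-(p : ℤ)) * p = (p : ℚ) ^ (-(p : ℤ) + 1) := by
                rw [zpow_add_one₀ hq0.ne']
            _ ≤ (p : ℚ) ^ (-3 : ℤ) := by
                apply zpow_le_zpow_right₀ hq1.le
                have : (5 : ℤ) ≤ (p : ℤ) := by exact_mod_cast hp5
                linarith
        · have hB : padicNorm p (bernoulli i) ≤ 1 :=
            bernoulli_padicNorm_le i (by omega)
          have hC : padicNorm p ((p.choose i : ℕ) : ℚ) ≤ (p : ℚ) ^ (-1 : ℤ) := by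
            have hdvd : ((p ^ 1 : ℕ) : ℤ) ∣ (p.choose i : ℤ) := by
              have := Nat.Prime.dvd_choose_self hp (k := i) (by omega) (by omega)
              exact_mod_cast (by simpa using this : p ^ 1 ∣ p.choose i)
            have := (padicNorm.dvd_iff_norm_le (p := p) (n := 1)
              (z := (p.choose i : ℤ))).mp hdvd
            simpa using this
          have h3 : (3 : ℕ) ≤ p - i := by omega
          calc padicNorm p (bernoulli i) * padicNorm p ((p.choose i : ℕ) : ℚ) *
                (p : ℚ) ^ (-((p - i : ℕ) : ℤ)) * p
              ≤ 1 * (p : ℚ) ^ (-1 : ℤ) * (p : ℚ) ^ (-((p - i : ℕ) : ℤ)) * p := by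
                have h1 := mul_le_mul hB hC (padicNorm.nonneg _) zero_le_one
                have h2 := mul_le_mul_of_nonneg_right h1
                  (zpow_nonneg hq0.le (-((p - i : ℕ) : ℤ)))
                exact mul_le_mul_of_nonneg_right h2 hq0.le
            _ = (p : ℚ) ^ (-1 + -((p - i : ℕ) : ℤ) + 1) := by
                rw [one_mul, ← zpow_add₀ hq0.ne', zpow_add_one₀ hq0.ne']
            _ ≤ (p : ℚ) ^ (-3 : ℤ) := by
                apply zpow_le_zpow_right₀ hq1.le
                have : (3 : ℤ) ≤ ((p - i : ℕ) : ℤ) := by exact_mod_cast h3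
                linarith
    · positivity
  -- Step 6: conclude
  have hnq : padicNorm p (q * p) ≤ (p : ℚ) ^ (-3 : ℤ) := by rw [hqp]; exact hSig
  rw [padicNorm.mul, padicNorm.padicNorm_p_of_prime] at hnq
  calc padicNorm p q = padicNorm p q * (p : ℚ)⁻¹ * p := by field_simp
    _ ≤ (p : ℚ) ^ (-3 : ℤ) * p := mul_le_mul_of_nonneg_right hnq hq0.le
    _ = (p : ℚ) ^ (-2 : ℤ) := by
        rw [← zpow_add_one₀ hq0.ne']
        norm_num
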